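/- With the construction data as in the context, for every N ≥ 1 the family (X_N^{(1)},…,X_N^{(ℓ)}) of columns of the block matrix (θ^⌊α^N⌋ I_ℓ ; F_N) is a ℤ-basis of the lattice B_N ∩ ℤ^{2ℓ}; consequently H(B_N) = ‖X_N^{(1)} ∧ ⋯ ∧ X_N^{(ℓ)}‖, and there exist a constant c̃ > 0 (depending only on the construction data, not on N) and N₀ such that H(B_N) ≥ c̃·(θ^⌊α^N⌋)^ℓ for all N ≥ N₀. -/

import Mathlib

open scoped BigOperators ENNReal

noncomputable section

/-- A vector of `ℝⁿ` has rational coordinates. -/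
def IsRatVec {n : ℕ} (v : EuclideanSpace ℝ (Fin n)) : Prop := ∀ i, ∃ q : ℚ, v i = (q : ℝ)

/-- A vector of `ℝⁿ` has integer coordinates. -/
def IsIntVec {n : ℕ} (v : EuclideanSpace ℝ (Fin n)) : Prop := ∀ i, ∃ z : ℤ, v i = (z : ℝ)

/-- A subspace of `ℝⁿ` is rational if it is spanned by vectors with rational coordinates. -/
def IsRationalSubspace {n : ℕ} (B : Submodule ℝ (EuclideanSpace ℝ (Fin n))) : Prop :=
  ∃ S : Set (EuclideanSpace ℝ (Fin n)), (∀ v ∈ S, IsRatVec v) ∧ Submodule.span ℝ S = B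

/-- `v` is a `ℤ`-basis of the lattice `B ∩ ℤⁿ`. -/
def IsZBasisOf {n e : ℕ} (B : Submodule ℝ (EuclideanSpace ℝ (Fin n)))
    (v : Fin e → EuclideanSpace ℝ (Fin n)) : Prop :=
  (∀ i, v i ∈ B ∧ IsIntVec (v i)) ∧
    ∀ x : EuclideanSpace ℝ (Fin n), x ∈ B → IsIntVec x →
      ∃! c : Fin e → ℤ, x = ∑ i, (c i : ℝ) • v i

/-- Generalised determinant `√(det(ᵀM·M))` of a family of vectors, i.e. the norm
`‖v₁ ∧ ⋯ ∧ v_e‖` of their exterior product (square root of the Gram determinant). -/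
def gramDet {n e : ℕ} (v : Fin e → EuclideanSpace ℝ (Fin n)) : ℝ :=
  Real.sqrt (Matrix.det (Matrix.of fun i j => (inner ℝ (v i) (v j) : ℝ)))

/-- Height of a rational subspace: `√(det(ᵀM·M))` for `M` a matrix whose columns form a
`ℤ`-basis of `B ∩ ℤⁿ` (this value is independent of the chosen basis). -/
def height {n : ℕ} (B : Submodule ℝ (EuclideanSpace ℝ (Fin n))) : ℝ :=
  sSup {h : ℝ | ∃ (e : ℕ) (v : Fin e → EuclideanSpace ℝ (Fin n)), IsZBasisOf B v ∧ h = gramDet v}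

/-- `ψ(X,Y)`, the sine of the angle between `X` and `Y`. -/
def psiVec {n : ℕ} (X Y : EuclideanSpace ℝ (Fin n)) : ℝ :=
  Real.sqrt (‖X‖ ^ 2 * ‖Y‖ ^ 2 - (inner ℝ X Y : ℝ) ^ 2) / (‖X‖ * ‖Y‖)

/-- `ψⱼ(A,B)`, the `j`-th canonical angle between the subspaces `A` and `B`. -/
def psiSub {n : ℕ} (j : ℕ) (A B : Submodule ℝ (EuclideanSpace ℝ (Fin n))) : ℝ :=
  sInf {l : ℝ | 0 ≤ l ∧ ∃ Aj : Submodule ℝ (EuclideanSpace ℝ (Fin n)), Aj ≤ A ∧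
    Module.finrank ℝ Aj = j ∧ ∀ X ∈ Aj, X ≠ 0 → ∃ Y ∈ B, Y ≠ 0 ∧ psiVec X Y ≤ l}

/-- `A` is `(e,j)`-irrational: `dim (A ∩ B) < j` for every rational subspace `B` of dim `e`. -/
def IsIrrational {n : ℕ} (e j : ℕ) (A : Submodule ℝ (EuclideanSpace ℝ (Fin n))) : Prop :=
  ∀ B : Submodule ℝ (EuclideanSpace ℝ (Fin n)), IsRationalSubspace B →
    Module.finrank ℝ B = e → Module.finrank ℝ ↥(A ⊓ B) < j

/-- The exponent of approximation `μₙ(A|e)ⱼ ∈ [0,∞]`. -/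
def mu {n : ℕ} (e j : ℕ) (A : Submodule ℝ (EuclideanSpace ℝ (Fin n))) : ℝ≥0∞ :=
  sSup {x : ℝ≥0∞ | ∃ β : ℝ, 0 < β ∧ x = ENNReal.ofReal β ∧
    {B : Submodule ℝ (EuclideanSpace ℝ (Fin n)) | IsRationalSubspace B ∧
      Module.finrank ℝ B = e ∧ psiSub j A B ≤ height B ^ (-β)}.Infinite}

/-- `μ̂ₙ(d|e)ⱼ = inf {μₙ(A|e)ⱼ : A ∈ 𝔍ₙ(d,e)ⱼ}`. -/
def muHat (n d e j : ℕ) : ℝ≥0∞ :=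
  sInf (mu e j '' {A : Submodule ℝ (EuclideanSpace ℝ (Fin n)) |
    Module.finrank ℝ A = d ∧ IsIrrational e j A})

section St16Aux
open Matrix

/-- Evaluate a finite sum of Euclidean vectors coordinatewise. -/
theorem st16_sum_apply {n : ℕ} {m : Type*} [Fintype m] (v : m → EuclideanSpace ℝ (Fin n))
    (c : m → ℝ) (i : Fin n) : (∑ j, c j • v j) i = ∑ j, c j * v j i := by
  induction (Finset.univ : Finset m) using Finset.cons_induction with
  | empty => rfl
  | cons a s ha ih => rw [Finset.sum_cons, Finset.sum_cons, ← ih]; rfl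

/-- Determinant bound: every entry bounded by `c` gives `|det| ≤ ℓ! * c^ℓ`. -/
theorem st16_abs_det_le {ℓ : ℕ} (M : Matrix (Fin ℓ) (Fin ℓ) ℤ) (c : ℤ)
    (h : ∀ i j, |M i j| ≤ c) : |M.det| ≤ (Nat.factorial ℓ : ℤ) * c ^ ℓ := by
  rw [Matrix.det_apply]
  calc |∑ σ : Equiv.Perm (Fin ℓ), Equiv.Perm.sign σ • ∏ i, M (σ i) i|
      ≤ ∑ σ : Equiv.Perm (Fin ℓ), |Equiv.Perm.sign σ • ∏ i, M (σ i) i| :=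
        Finset.abs_sum_le_sum_abs _ _
    _ ≤ ∑ _σ : Equiv.Perm (Fin ℓ), c ^ ℓ := by
        refine Finset.sum_le_sum fun σ _ => ?_
        have hs : |Equiv.Perm.sign σ • ∏ i, M (σ i) i| = |∏ i, M (σ i) i| := by
          rcases Int.units_eq_one_or (Equiv.Perm.sign σ) with h1 | h1 <;> rw [h1] <;> simp
        rw [hs, Finset.abs_prod]
        calc ∏ i, |M (σ i) i| ≤ ∏ _i : Fin ℓ, c :=
              Finset.prod_le_prod (fun i _ => abs_nonneg _) (fun i _ => h _ _)
          _ = c ^ ℓ := by simp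
    _ = (Nat.factorial ℓ : ℤ) * c ^ ℓ := by
        rw [Finset.sum_const, Finset.card_univ, Fintype.card_perm, Fintype.card_fin, nsmul_eq_mul]

/-- Composition of integral change-of-basis matrices is the identity. -/
theorem st16_comp_eq_one {n ℓ e : ℕ} {B : Submodule ℝ (EuclideanSpace ℝ (Fin n))}
    {X : Fin ℓ → EuclideanSpace ℝ (Fin n)} {v : Fin e → EuclideanSpace ℝ (Fin n)}
    (hX : IsZBasisOf B X) (C : Fin ℓ → Fin e → ℤ) (D : Fin e → Fin ℓ → ℤ)
    (hC : ∀ j, X j = ∑ i, (C j i : ℝ) • v i) (hD : ∀ i, v i = ∑ k, (D i k : ℝ) • X k) :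
    Matrix.of C * Matrix.of D = 1 := by
  ext j k
  have key : X j = ∑ k, ((∑ i, C j i * D i k : ℤ) : ℝ) • X k := by
    calc X j = ∑ i, (C j i : ℝ) • v i := hC j
      _ = ∑ i, (C j i : ℝ) • ∑ k, (D i k : ℝ) • X k :=
          Finset.sum_congr rfl fun i _ => by rw [← hD i]
      _ = ∑ i, ∑ k, ((C j i * D i k : ℤ) : ℝ) • X k := by
          refine Finset.sum_congr rfl fun i _ => ?_
          rw [Finset.smul_sum]
          refine Finset.sum_congr rfl fun k _ => ?_
          rw [smul_smul]; push_cast; ring_nf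
      _ = ∑ k, ((∑ i, C j i * D i k : ℤ) : ℝ) • X k := by
          rw [Finset.sum_comm]
          refine Finset.sum_congr rfl fun k _ => ?_
          rw [← Finset.sum_smul]; norm_cast
  have idrep : X j = ∑ k, (((fun k => if j = k then (1:ℤ) else 0) k : ℝ)) • X k := by
    simp
  have huniq := hX.2 (X j) (hX.1 j).1 (hX.1 j).2
  have := huniq.unique key idrep
  have h2 := congrFun this k
  simp only [Matrix.mul_apply, Matrix.one_apply, Matrix.of_apply]
  simpa using h2

theorem st16_gramDet_eq {n ℓ e : ℕ} {B : Submodule ℝ (EuclideanSpace ℝ (Fin n))}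
    {X : Fin ℓ → EuclideanSpace ℝ (Fin n)} {v : Fin e → EuclideanSpace ℝ (Fin n)}
    (hX : IsZBasisOf B X) (hv : IsZBasisOf B v) : gramDet v = gramDet X := by
  choose D hD using fun i : Fin e => (hX.2 (v i) (hv.1 i).1 (hv.1 i).2).exists
  choose C hC using fun j : Fin ℓ => (hv.2 (X j) (hX.1 j).1 (hX.1 j).2).exists
  have hCD : Matrix.of C * Matrix.of D = 1 := st16_comp_eq_one hX C D hC hD
  have hDC : Matrix.of D * Matrix.of C = 1 := st16_comp_eq_one hv D C hD hC
  -- e = ℓ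
  have heℓ : e = ℓ := by
    have h1 : (Matrix.of C).map (Int.castRingHom ℚ) * (Matrix.of D).map (Int.castRingHom ℚ) = 1 := by
      rw [← Matrix.map_mul, hCD, Matrix.map_one _ (map_zero _) (map_one _)]
    have h2 : (Matrix.of D).map (Int.castRingHom ℚ) * (Matrix.of C).map (Int.castRingHom ℚ) = 1 := by
      rw [← Matrix.map_mul, hDC, Matrix.map_one _ (map_zero _) (map_one _)]
    have eqv : (Fin e → ℚ) ≃ₗ[ℚ] (Fin ℓ → ℚ) :=
      LinearEquiv.ofLinear
        (Matrix.toLin' ((Matrix.of C).map (Int.castRingHom ℚ)))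
        (Matrix.toLin' ((Matrix.of D).map (Int.castRingHom ℚ)))
        (by rw [← Matrix.toLin'_mul, h1, Matrix.toLin'_one])
        (by rw [← Matrix.toLin'_mul, h2, Matrix.toLin'_one])
    simpa using eqv.finrank_eq
  subst heℓ
  -- determinant of D is ±1
  have hdet : (Matrix.of D).det * (Matrix.of C).det = 1 := by
    rw [← Matrix.det_mul, hDC, Matrix.det_one]
  have hDsq : ((Matrix.of D).det) ^ 2 = 1 := by
    rcases Int.mul_eq_one_iff_eq_one_or_neg_one.mp hdet with ⟨h1, _⟩ | ⟨h1, _⟩ <;>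
      rw [h1] <;> ring
  set Dr : Matrix (Fin e) (Fin e) ℝ := (Matrix.of D).map (Int.castRingHom ℝ) with hDrdef
  have hGram : (Matrix.of fun i j => (inner ℝ (v i) (v j) : ℝ)) =
      Dr * (Matrix.of fun i j => (inner ℝ (X i) (X j) : ℝ)) * Dr.transpose := by
    ext i j
    simp only [Matrix.mul_apply, Matrix.of_apply, Matrix.transpose_apply, Matrix.map_apply,
      hDrdef]
    rw [hD i, hD j]
    simp only [sum_inner, inner_sum, real_inner_smul_left, real_inner_smul_right,
      Finset.sum_mul, Finset.mul_sum]
    refine Finset.sum_congr rfl fun k _ => Finset.sum_congr rfl fun l _ => ?_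
    simp only [Int.coe_castRingHom, map_intCast]
    ring
  have hdetDr : Dr.det = ((Matrix.of D).det : ℝ) := by
    rw [hDrdef, show ((Matrix.of D).det : ℝ) = (Int.castRingHom ℝ) (Matrix.of D).det from rfl,
      RingHom.map_det]
    rfl
  unfold gramDet
  rw [hGram, Matrix.det_mul, Matrix.det_mul, Matrix.det_transpose, hdetDr]
  have : (((Matrix.of D).det : ℝ)) * (Matrix.of fun i j => (inner ℝ (X i) (X j) : ℝ)).det *
      (((Matrix.of D).det : ℝ)) = (Matrix.of fun i j => (inner ℝ (X i) (X j) : ℝ)).det := by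
    have h2 : (((Matrix.of D).det : ℝ)) * (((Matrix.of D).det : ℝ)) = 1 := by
      rw [← Int.cast_mul, ← pow_two, hDsq, Int.cast_one]
    calc (((Matrix.of D).det : ℝ)) * (Matrix.of fun i j => (inner ℝ (X i) (X j) : ℝ)).det *
          (((Matrix.of D).det : ℝ))
        = ((((Matrix.of D).det : ℝ)) * (((Matrix.of D).det : ℝ))) *
          (Matrix.of fun i j => (inner ℝ (X i) (X j) : ℝ)).det := by ring
      _ = (Matrix.of fun i j => (inner ℝ (X i) (X j) : ℝ)).det := by rw [h2, one_mul]
  rw [this]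

theorem st16_det_ge {ℓ : ℕ} (t : ℝ) (S : Matrix (Fin ℓ) (Fin ℓ) ℝ) (hS : S.PosSemidef) :
    (t ^ 2) ^ ℓ ≤ ((t ^ 2) • (1 : Matrix (Fin ℓ) (Fin ℓ) ℝ) + S).det := by
  set G : Matrix (Fin ℓ) (Fin ℓ) ℝ := (t ^ 2) • (1 : Matrix (Fin ℓ) (Fin ℓ) ℝ) + S with hGdef
  have hGH : G.IsHermitian := by
    unfold Matrix.IsHermitian
    rw [hGdef, Matrix.conjTranspose_add, Matrix.conjTranspose_smul, Matrix.conjTranspose_one,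
      hS.1, star_trivial]
  have heig : ∀ i, t ^ 2 ≤ hGH.eigenvalues i := by
    intro i
    have hval := hGH.eigenvalues_eq i
    set u : Fin ℓ → ℝ := ⇑(hGH.eigenvectorBasis i) with hu
    have hmul : G *ᵥ u = t ^ 2 • u + S *ᵥ u := by
      rw [hGdef, Matrix.add_mulVec, Matrix.smul_mulVec, Matrix.one_mulVec]
    have hdot1 : dotProduct (star u) u = 1 := by
      have hnorm : ‖hGH.eigenvectorBasis i‖ = 1 := hGH.eigenvectorBasis.orthonormal.1 i
      have : (inner ℝ (hGH.eigenvectorBasis i) (hGH.eigenvectorBasis i) : ℝ) = 1 := by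
        rw [real_inner_self_eq_norm_sq, hnorm]; norm_num
      rw [← this]
      simp only [dotProduct, PiLp.inner_apply, RCLike.inner_apply, starRingEnd_apply,
        star_trivial, Pi.star_apply, hu]
    have hpos : 0 ≤ dotProduct (star u) (S *ᵥ u) := by
      have := hS.dotProduct_mulVec_nonneg u
      simpa using this
    rw [hval, hmul]
    rw [dotProduct_add, dotProduct_smul, hdot1]
    simp only [smul_eq_mul, mul_one]
    simpa using hpos
  have hdet : G.det = ∏ i, hGH.eigenvalues i := by
    have := hGH.det_eq_prod_eigenvalues
    simpa using this
  rw [hdet]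
  calc (t ^ 2) ^ ℓ = ∏ _i : Fin ℓ, t ^ 2 := by simp
    _ ≤ ∏ i, hGH.eigenvalues i :=
      Finset.prod_le_prod (fun i _ => sq_nonneg t) (fun i _ => heig i)

theorem st16_height_eq {n ℓ : ℕ} {B : Submodule ℝ (EuclideanSpace ℝ (Fin n))}
    {X : Fin ℓ → EuclideanSpace ℝ (Fin n)} (hX : IsZBasisOf B X) : height B = gramDet X := by
  have hset : {h : ℝ | ∃ (e : ℕ) (v : Fin e → EuclideanSpace ℝ (Fin n)),
      IsZBasisOf B v ∧ h = gramDet v} = {gramDet X} := by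
    ext h
    constructor
    · rintro ⟨e, v, hv, rfl⟩
      exact st16_gramDet_eq hX hv
    · rintro rfl
      exact ⟨ℓ, X, hX, rfl⟩
  rw [height, hset, csSup_singleton]


/-- **Claim 4.4.** The columns `X_N` form a `ℤ`-basis of `B_N ∩ ℤ^{2ℓ}`, so that
`H(B_N) = ‖X_N⁽¹⁾ ∧ ⋯ ∧ X_N⁽ℓ⁾‖`; moreover `H(B_N) ≥ c̃·(θ^⌊α^N⌋)^ℓ` for `N` large. -/
theorem statement16
    (ℓ : ℕ) (hℓ : 1 ≤ ℓ) (α : ℝ) (hα : 2 < α) (θ : ℕ) (hθp : θ.Prime)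
    (hθ : (Nat.factorial ℓ : ℝ) * (2 * (ℓ : ℝ) + 1) ^ ℓ < (θ : ℝ))
    (E : Fin ℓ → Fin ℓ → ℕ → ℕ)
    (hE : ∀ i j k, (i ≠ j → E i j k = 1 ∨ E i j k = 2) ∧
      (i = j → E i j k = 2 * ℓ ∨ E i j k = 2 * ℓ + 1))
    (f : ℕ → Fin ℓ → Fin ℓ → ℕ)
    (hf : ∀ N i j, f N i j =
      ∑ k ∈ Finset.range (N + 1), E i j k * θ ^ (Nat.floor (α ^ N) - Nat.floor (α ^ k)))
    (X : ℕ → Fin ℓ → EuclideanSpace ℝ (Fin (2 * ℓ)))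
    (hX : ∀ N j i, X N j i = if h : (i : ℕ) < ℓ then
        (if (⟨i, h⟩ : Fin ℓ) = j then ((θ : ℝ) ^ Nat.floor (α ^ N)) else 0)
      else (f N ⟨(i : ℕ) - ℓ, by have := i.isLt; omega⟩ j : ℝ))
    (B : ℕ → Submodule ℝ (EuclideanSpace ℝ (Fin (2 * ℓ))))
    (hB : ∀ N, B N = Submodule.span ℝ (Set.range (X N)))
    : (∀ N ≥ 1, IsZBasisOf (B N) (X N) ∧ height (B N) = gramDet (X N)) ∧
      ∃ c > 0, ∃ N₀ : ℕ, ∀ N ≥ N₀, c * ((θ : ℝ) ^ Nat.floor (α ^ N)) ^ ℓ ≤ height (B N) := by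
  have hθ0 : 0 < θ := hθp.pos
  have hα1 : (1 : ℝ) ≤ α := by linarith
  -- basic coordinate facts, for any N
  have lt2 : ∀ i : Fin ℓ, (i : ℕ) < 2 * ℓ := fun i => by have := i.isLt; omega
  have lt2' : ∀ i : Fin ℓ, ℓ + (i : ℕ) < 2 * ℓ := fun i => by have := i.isLt; omega
  have hXtop : ∀ N (j i : Fin ℓ),
      X N j ⟨(i : ℕ), lt2 i⟩ = if i = j then ((θ : ℝ) ^ Nat.floor (α ^ N)) else 0 := by
    intro N j i
    rw [hX]
    rw [dif_pos (show ((⟨(i : ℕ), lt2 i⟩ : Fin (2 * ℓ)) : ℕ) < ℓ from i.isLt)]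
  have hXbot : ∀ N (j i : Fin ℓ), X N j ⟨ℓ + (i : ℕ), lt2' i⟩ = (f N i j : ℝ) := by
    intro N j i
    rw [hX]
    rw [dif_neg (show ¬ ((⟨ℓ + (i : ℕ), lt2' i⟩ : Fin (2 * ℓ)) : ℕ) < ℓ by simp)]
    exact congrArg _ (congrFun (congrArg (f N) (Fin.ext (by simp))) j)
  -- sums coordinatewise
  have hsumtop : ∀ N (r : Fin ℓ → ℝ) (i : Fin ℓ),
      (∑ j, r j • X N j) ⟨(i : ℕ), lt2 i⟩ = r i * ((θ : ℝ) ^ Nat.floor (α ^ N)) := by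
    intro N r i
    rw [st16_sum_apply]
    simp only [hXtop, mul_ite, mul_zero]
    simp [Finset.sum_ite_eq]
  have hsumbot : ∀ N (r : Fin ℓ → ℝ) (i : Fin ℓ),
      (∑ j, r j • X N j) ⟨ℓ + (i : ℕ), lt2' i⟩ = ∑ j, r j * (f N i j : ℝ) := by
    intro N r i
    rw [st16_sum_apply]
    simp only [hXbot]
  -- integrality of the X N j
  have hXint : ∀ N j, IsIntVec (X N j) := by
    intro N j i0
    rw [hX]
    by_cases h : (i0 : ℕ) < ℓ
    · rw [dif_pos h]
      by_cases h2 : (⟨(i0 : ℕ), h⟩ : Fin ℓ) = j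
      · exact ⟨(θ : ℤ) ^ Nat.floor (α ^ N), by rw [if_pos h2]; push_cast; ring⟩
      · exact ⟨0, by rw [if_neg h2]; simp⟩
    · rw [dif_neg h]
      exact ⟨(f N ⟨(i0 : ℕ) - ℓ, by have := i0.isLt; omega⟩ j : ℤ), by push_cast; ring⟩
  -- floors grow strictly
  have hfloorlt : ∀ {k N : ℕ}, k < N → Nat.floor (α ^ k) < Nat.floor (α ^ N) := by
    intro k N hkN
    have hk1 : (1:ℝ) ≤ α ^ k := one_le_pow₀ hα1
    have h2 : α ^ (k+1) ≤ α ^ N := pow_le_pow_right₀ hα1 hkN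
    have h3 : α ^ k * 2 ≤ α ^ (k+1) := by rw [pow_succ]; nlinarith
    have h1 : α ^ k + 1 ≤ α ^ N := by nlinarith
    calc Nat.floor (α ^ k) < Nat.floor (α ^ k) + 1 := Nat.lt_succ_self _
      _ = Nat.floor (α ^ k + 1) := (Nat.floor_add_one (by positivity)).symm
      _ ≤ Nat.floor (α ^ N) := Nat.floor_mono h1
  -- the ℤ-basis property
  have key : ∀ N, 1 ≤ N → IsZBasisOf (B N) (X N) := by
    intro N hN
    set m := Nat.floor (α ^ N) with hm
    set Tz : ℤ := (θ : ℤ) ^ m with hTzdef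
    have hTrTz : ((θ : ℝ) ^ m) = (Tz : ℝ) := by rw [hTzdef]; push_cast; ring
    have hTr0 : ((θ : ℝ) ^ m) ≠ 0 := by positivity
    set Fz : Matrix (Fin ℓ) (Fin ℓ) ℤ := Matrix.of (fun i j => (f N i j : ℤ)) with hFzdef
    set Ez : Matrix (Fin ℓ) (Fin ℓ) ℤ := Matrix.of (fun i j => (E i j N : ℤ)) with hEzdef
    have hEle : ∀ i j : Fin ℓ, |Ez i j| ≤ 2 * (ℓ:ℤ) + 1 := by
      intro i j
      rw [hEzdef, Matrix.of_apply, abs_of_nonneg (by positivity)]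
      by_cases h : i = j
      · rcases (hE i j N).2 h with h1 | h1 <;> rw [h1] <;> push_cast <;> omega
      · rcases (hE i j N).1 h with h1 | h1 <;> rw [h1] <;> push_cast <;> omega
    have hEdiag : ∀ k : Fin ℓ, 2*(ℓ:ℤ) ≤ Ez k k := by
      intro k
      rcases (hE k k N).2 rfl with h1 | h1 <;>
        simp only [hEzdef, Matrix.of_apply, h1] <;> push_cast <;> omega
    have hEoff : ∀ k j : Fin ℓ, k ≠ j → |Ez k j| ≤ 2 := by
      intro k j hkj
      rw [hEzdef, Matrix.of_apply, abs_of_nonneg (Int.natCast_nonneg _)]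
      rcases (hE k j N).1 hkj with h1 | h1 <;> rw [h1] <;> push_cast <;> omega
    have hEdet0 : Ez.det ≠ 0 := by
      have hR : ((Ez.map (Int.castRingHom ℝ))).det ≠ 0 := by
        apply det_ne_zero_of_sum_row_lt_diag
        intro k
        have hcard : (Finset.univ.erase k).card = ℓ - 1 := by
          rw [Finset.card_erase_of_mem (Finset.mem_univ k), Finset.card_univ, Fintype.card_fin]
        have hsum : ∑ j ∈ Finset.univ.erase k, ‖(Ez.map (Int.castRingHom ℝ)) k j‖
            ≤ ((ℓ - 1 : ℕ) : ℝ) * 2 := by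
          calc ∑ j ∈ Finset.univ.erase k, ‖(Ez.map (Int.castRingHom ℝ)) k j‖
              ≤ ∑ _j ∈ Finset.univ.erase k, (2:ℝ) := by
                refine Finset.sum_le_sum fun j hj => ?_
                have hkj : k ≠ j := (Finset.ne_of_mem_erase hj).symm
                have h2 := hEoff k j hkj
                rw [Matrix.map_apply, Real.norm_eq_abs]
                have : |((Ez k j : ℤ) : ℝ)| = ((|Ez k j| : ℤ) : ℝ) := by
                  rw [Int.cast_abs]
                rw [show ((Int.castRingHom ℝ) (Ez k j)) = ((Ez k j : ℤ) : ℝ) from rfl, this]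
                exact_mod_cast h2
            _ = ((ℓ - 1 : ℕ) : ℝ) * 2 := by
                rw [Finset.sum_const, hcard]; simp [mul_comm]
        have hdiagR : (2:ℝ) * (ℓ:ℝ) ≤ ‖(Ez.map (Int.castRingHom ℝ)) k k‖ := by
          rw [Matrix.map_apply, Real.norm_eq_abs,
            show ((Int.castRingHom ℝ) (Ez k k)) = ((Ez k k : ℤ) : ℝ) from rfl]
          have h2 := hEdiag k
          calc (2:ℝ) * (ℓ:ℝ) = ((2 * (ℓ:ℤ) : ℤ) : ℝ) := by push_cast; ring
            _ ≤ ((Ez k k : ℤ) : ℝ) := by exact_mod_cast h2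
            _ ≤ |((Ez k k : ℤ) : ℝ)| := le_abs_self _
        have hlt : ((ℓ - 1 : ℕ) : ℝ) * 2 < 2 * (ℓ:ℝ) := by
          have h1 : (ℓ - 1 : ℕ) < ℓ := by omega
          have h2 : ((ℓ - 1 : ℕ) : ℝ) < (ℓ:ℝ) := by exact_mod_cast h1
          nlinarith
        linarith
      intro h0
      apply hR
      rw [show (Ez.map (Int.castRingHom ℝ)) = (Int.castRingHom ℝ).mapMatrix Ez from rfl,
        ← RingHom.map_det, h0]
      simp
    have habs : |Ez.det| ≤ (Nat.factorial ℓ : ℤ) * (2*(ℓ:ℤ)+1) ^ ℓ := st16_abs_det_le _ _ hEle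
    have hθZ : (Nat.factorial ℓ : ℤ) * (2*(ℓ:ℤ)+1) ^ ℓ < (θ : ℤ) := by exact_mod_cast hθ
    have hndvdE : ¬ ((θ:ℤ) ∣ Ez.det) := by
      intro hdvd
      have h1 : (θ:ℤ) ≤ |Ez.det| := Int.le_of_dvd (abs_pos.mpr hEdet0) ((dvd_abs _ _).mpr hdvd)
      omega
    have hFEdvd : ∀ i j : Fin ℓ, (θ:ℤ) ∣ (Fz i j - Ez i j) := by
      intro i j
      have hsplit : f N i j =
          (∑ k ∈ Finset.range N, E i j k * θ ^ (m - Nat.floor (α ^ k))) + E i j N := by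
        rw [hf, Finset.sum_range_succ, Nat.sub_self, pow_zero, mul_one]
      have heq : Fz i j - Ez i j =
          ((∑ k ∈ Finset.range N, E i j k * θ ^ (m - Nat.floor (α ^ k)) : ℕ) : ℤ) := by
        simp only [hFzdef, hEzdef, Matrix.of_apply, hsplit]
        push_cast
        ring
      rw [heq]
      have hdvdN : θ ∣ ∑ k ∈ Finset.range N, E i j k * θ ^ (m - Nat.floor (α ^ k)) := by
        refine Finset.dvd_sum fun k hk => ?_
        have hk' : k < N := Finset.mem_range.mp hk
        have h1 : Nat.floor (α ^ k) < m := hfloorlt hk'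
        exact Dvd.dvd.mul_left (dvd_pow_self θ (by omega)) _
      exact_mod_cast Int.natCast_dvd_natCast.mpr hdvdN
    have hndvdF : ¬ ((θ:ℤ) ∣ Fz.det) := by
      intro hdvd
      apply hndvdE
      have hmapeq : Fz.map (Int.castRingHom (ZMod θ)) = Ez.map (Int.castRingHom (ZMod θ)) := by
        ext i j
        simp only [Matrix.map_apply]
        have h1 : ((Fz i j - Ez i j : ℤ) : ZMod θ) = 0 :=
          (ZMod.intCast_zmod_eq_zero_iff_dvd _ _).mpr (hFEdvd i j)
        push_cast at h1
        have := sub_eq_zero.mp h1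
        exact_mod_cast this
      have h1 : ((Fz.det : ℤ) : ZMod θ) = ((Ez.det : ℤ) : ZMod θ) := by
        rw [show ((Fz.det : ℤ) : ZMod θ) = (Int.castRingHom (ZMod θ)) Fz.det from rfl,
          show ((Ez.det : ℤ) : ZMod θ) = (Int.castRingHom (ZMod θ)) Ez.det from rfl,
          RingHom.map_det, RingHom.map_det]
        exact congrArg Matrix.det hmapeq
      have h2 : ((Fz.det : ℤ) : ZMod θ) = 0 := (ZMod.intCast_zmod_eq_zero_iff_dvd _ _).mpr hdvd
      rw [← ZMod.intCast_zmod_eq_zero_iff_dvd, ← h1, h2]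
    have hprime : Prime ((θ:ℤ)) := Nat.prime_iff_prime_int.mp hθp
    have hcop : IsCoprime Tz Fz.det := ((hprime.coprime_iff_not_dvd).mpr hndvdF).pow_left
    -- assemble the basis property
    constructor
    · intro j
      refine ⟨?_, hXint N j⟩
      rw [hB N]
      exact Submodule.subset_span ⟨j, rfl⟩
    · intro x hxB hxInt
      rw [hB N] at hxB
      obtain ⟨r, hr⟩ := (Submodule.mem_span_range_iff_exists_fun ℝ).mp hxB
      choose z hz using hxInt
      set a : Fin ℓ → ℤ := fun i => z ⟨(i:ℕ), lt2 i⟩ with hadef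
      set b : Fin ℓ → ℤ := fun i => z ⟨ℓ + (i:ℕ), lt2' i⟩ with hbdef
      have hra : ∀ i, r i * ((θ:ℝ)^m) = (a i : ℝ) := by
        intro i
        rw [← hsumtop N r i, hr, hz]
      have hbot : ∀ i : Fin ℓ, (b i : ℝ) = ∑ j, r j * (f N i j : ℝ) := by
        intro i
        rw [← hsumbot N r i, hr, hz]
      have hdvd1 : ∀ i, Tz ∣ (Fz *ᵥ a) i := by
        intro i
        refine ⟨b i, ?_⟩
        have hreal : (((Fz *ᵥ a) i : ℤ) : ℝ) = ((Tz * b i : ℤ) : ℝ) := by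
          rw [show (Fz *ᵥ a) i = ∑ j, Fz i j * a j from rfl]
          push_cast
          rw [← hTrTz]
          calc ∑ j, (f N i j : ℝ) * (a j : ℝ)
              = ∑ j, (f N i j : ℝ) * (r j * (θ:ℝ)^m) := by
                refine Finset.sum_congr rfl fun j _ => by rw [hra j]
            _ = ((θ:ℝ)^m) * ∑ j, r j * (f N i j : ℝ) := by
                rw [Finset.mul_sum]
                exact Finset.sum_congr rfl fun j _ => by ring
            _ = ((θ:ℝ)^m) * (b i : ℝ) := by rw [hbot i]
        exact_mod_cast hreal
      have hdvd2 : ∀ j, Tz ∣ a j := by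
        intro j
        have hadj : Fz.det • a = Fz.adjugate *ᵥ (Fz *ᵥ a) := by
          rw [Matrix.mulVec_mulVec, Matrix.adjugate_mul, Matrix.smul_mulVec,
            Matrix.one_mulVec]
        have h3 : Fz.det * a j = ∑ k, Fz.adjugate j k * (Fz *ᵥ a) k := by
          have h4 := congrFun hadj j
          simpa [Matrix.mulVec, dotProduct, smul_eq_mul] using h4
        have h5 : Tz ∣ Fz.det * a j := by
          rw [h3]
          exact Finset.dvd_sum fun k _ => Dvd.dvd.mul_left (hdvd1 k) _
        exact hcop.dvd_of_dvd_mul_left h5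
      set c : Fin ℓ → ℤ := fun j => a j / Tz with hcdef
      have hca : ∀ j, (c j : ℝ) * ((θ:ℝ)^m) = (a j : ℝ) := by
        intro j
        rw [hTrTz, ← Int.cast_mul, Int.ediv_mul_cancel (hdvd2 j)]
      have hrc : ∀ j, r j = (c j : ℝ) := by
        intro j
        have h5 : r j * ((θ:ℝ)^m) = (c j : ℝ) * ((θ:ℝ)^m) := by rw [hra j, ← hca j]
        exact mul_right_cancel₀ hTr0 h5
      have hxc : x = ∑ i, ((c i : ℝ)) • X N i := by
        rw [← hr]
        exact (Finset.sum_congr rfl fun j _ => by rw [hrc j]).symm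
      refine ⟨c, hxc, ?_⟩
      intro y hy
      funext j
      have hyt : x ⟨(j:ℕ), lt2 j⟩ = (y j : ℝ) * ((θ:ℝ)^m) := by
        rw [hy]; exact hsumtop N (fun i => (y i : ℝ)) j
      have hct : x ⟨(j:ℕ), lt2 j⟩ = (c j : ℝ) * ((θ:ℝ)^m) := by
        rw [hxc]; exact hsumtop N (fun i => (c i : ℝ)) j
      have h6 : (y j : ℝ) = (c j : ℝ) := mul_right_cancel₀ hTr0 (hyt ▸ hct ▸ rfl)
      exact_mod_cast h6
  -- lower bound on the Gram determinant
  have hgram : ∀ N, ((θ : ℝ) ^ Nat.floor (α ^ N)) ^ ℓ ≤ gramDet (X N) := by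
    intro N
    set t : ℝ := (θ : ℝ) ^ Nat.floor (α ^ N) with htdef
    have ht0 : 0 ≤ t := by positivity
    set Fr : Matrix (Fin ℓ) (Fin ℓ) ℝ := Matrix.of (fun i j => (f N i j : ℝ)) with hFrdef
    set eqv : Fin ℓ ⊕ Fin ℓ ≃ Fin (2 * ℓ) :=
      finSumFinEquiv.trans (finCongr (two_mul ℓ).symm) with heqvdef
    have heqvl : ∀ i : Fin ℓ, eqv (Sum.inl i) = ⟨(i:ℕ), lt2 i⟩ := by
      intro i; exact Fin.ext (by simp [heqvdef])
    have heqvr : ∀ i : Fin ℓ, eqv (Sum.inr i) = ⟨ℓ + (i:ℕ), lt2' i⟩ := by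
      intro i; exact Fin.ext (by simp [heqvdef, Nat.add_comm])
    have hsplit : ∀ g : Fin (2*ℓ) → ℝ,
        ∑ i0, g i0 = ∑ i : Fin ℓ, g (eqv (Sum.inl i)) + ∑ i : Fin ℓ, g (eqv (Sum.inr i)) := by
      intro g
      rw [← Equiv.sum_comp eqv g, Fintype.sum_sum_type]
    have hGX : (Matrix.of fun j k => (inner ℝ (X N j) (X N k) : ℝ)) =
        (t^2) • (1 : Matrix (Fin ℓ) (Fin ℓ) ℝ) + Frᴴ * Fr := by
      ext j k
      have hinner : (inner ℝ (X N j) (X N k) : ℝ) = ∑ i0 : Fin (2*ℓ), X N j i0 * X N k i0 := by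
        rw [PiLp.inner_apply]
        exact Finset.sum_congr rfl fun i0 _ => by simp [RCLike.inner_apply, mul_comm]
      have htopsum : ∑ i : Fin ℓ, (if i = j then t else 0) * (if i = k then t else 0)
          = if j = k then t^2 else 0 := by
        by_cases hjk : j = k
        · subst hjk
          rw [if_pos rfl]
          rw [Finset.sum_eq_single j]
          · simp [pow_two]
          · intro i _ hij; simp [hij]
          · intro h; exact absurd (Finset.mem_univ j) h
        · rw [if_neg hjk]
          apply Finset.sum_eq_zero
          intro i _
          by_cases h1 : i = j
          · subst h1; simp [hjk]
          · simp [h1]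
      simp only [Matrix.of_apply]
      rw [hinner, hsplit]
      have hl : ∑ i : Fin ℓ, X N j (eqv (Sum.inl i)) * X N k (eqv (Sum.inl i))
          = if j = k then t^2 else 0 := by
        rw [← htopsum]
        refine Finset.sum_congr rfl fun i _ => ?_
        rw [heqvl i, hXtop, hXtop]
      have hrr : ∑ i : Fin ℓ, X N j (eqv (Sum.inr i)) * X N k (eqv (Sum.inr i))
          = ∑ i : Fin ℓ, (f N i j : ℝ) * (f N i k : ℝ) := by
        refine Finset.sum_congr rfl fun i _ => ?_
        rw [heqvr i, hXbot, hXbot]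
      rw [hl, hrr]
      simp only [Matrix.add_apply, Matrix.smul_apply, Matrix.one_apply, Matrix.mul_apply,
        Matrix.conjTranspose_apply, hFrdef, Matrix.of_apply, star_trivial, smul_eq_mul,
        mul_ite, mul_one, mul_zero]
    have hdet : ((t^ℓ)^2 : ℝ) ≤ (Matrix.of fun j k => (inner ℝ (X N j) (X N k) : ℝ)).det := by
      rw [hGX]
      have := st16_det_ge t (Frᴴ * Fr) (Matrix.posSemidef_conjTranspose_mul_self Fr)
      calc ((t^ℓ)^2 : ℝ) = (t^2)^ℓ := by ring
        _ ≤ _ := this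
    calc t ^ ℓ = Real.sqrt ((t^ℓ)^2) := (Real.sqrt_sq (by positivity)).symm
      _ ≤ gramDet (X N) := Real.sqrt_le_sqrt hdet
  refine ⟨fun N hN => ⟨key N hN, st16_height_eq (key N hN)⟩, 1, one_pos, 1, fun N hN => ?_⟩
  rw [st16_height_eq (key N hN), one_mul]
  exact hgram N

end St16Aux

end
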